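/- For the BlindOracle algorithm B and the offline optimal algorithm A for online caching with cache size k, there exists (for every input) a valid matching X_n between the final cache states such that ALG_B + Φ(n) ≤ OPT + M, where Φ(n) is the number of unmatched pages in B's final cache and M is the number of inversions; in particular ALG_B ≤ OPT + M. -/
import Mathlib


/-- True next-arrival times: y t is the least t' > t with σ t' = σ t (within the
sequence of length n), or n + 1 if the page is never requested again. -/
def NextArrival (n : ℕ) (σ y : ℕ → ℕ) : Prop :=
  ∀ t < n, IsLeast {t' | (t < t' ∧ t' < n ∧ σ t' = σ t) ∨ t' = n + 1} (y t)

/-- Number of inversions: pairs (i,j) with y_i < y_j but h_i ≥ h_j. -/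
def numInversions (n : ℕ) (h y : ℕ → ℕ) : ℕ :=
  ((Finset.range n ×ˢ Finset.range n).filter
    (fun p => y p.1 < y p.2 ∧ h p.2 ≤ h p.1)).card

/-- BlindOracle dynamics on caches of request indices: on a hit, replace the old
request index of the page by the current one (free); on a miss with space, insert;
on a miss with a full cache, evict a cached request with the latest predicted
next arrival h. -/
def BlindOracleRun (n k : ℕ) (σ h : ℕ → ℕ) (B : ℕ → Finset ℕ) : Prop :=
  B 0 = ∅ ∧ ∀ t < n,
    (∃ i ∈ B t, σ i = σ t ∧ B (t + 1) = insert t (B t \ {i})) ∨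
    ((∀ i ∈ B t, σ i ≠ σ t) ∧ (B t).card < k ∧ B (t + 1) = insert t (B t)) ∨
    ((∀ i ∈ B t, σ i ≠ σ t) ∧ (B t).card = k ∧
      ∃ b ∈ B t, (∀ i ∈ B t, h i ≤ h b) ∧ B (t + 1) = insert t (B t \ {b}))

/-- BlindOracle's cost: the number of evictions, i.e. of misses with a full cache. -/
def blindOracleCost (n k : ℕ) (σ : ℕ → ℕ) (B : ℕ → Finset ℕ) : ℕ :=
  ((Finset.range n).filter
    (fun t => (∀ i ∈ B t, σ i ≠ σ t) ∧ (B t).card = k)).card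

/-- A valid execution of any caching algorithm on caches of request indices. -/
def CacheRun (n k : ℕ) (A : ℕ → Finset ℕ) : Prop :=
  A 0 = ∅ ∧ (∀ t, (A t).card ≤ k) ∧
    ∀ t < n, t ∈ A (t + 1) ∧ A (t + 1) ⊆ insert t (A t)

/-- Eviction cost of a cache run: removals of requests whose page differs from
the currently requested page. -/
def runCost (n : ℕ) (σ : ℕ → ℕ) (A : ℕ → Finset ℕ) : ℕ :=
  ∑ t ∈ Finset.range n, ((A t).filter (fun i => i ∉ A (t + 1) ∧ σ i ≠ σ t)).card

def FreshIdx (σ : ℕ → ℕ) (t b : ℕ) : Prop :=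
  b < t ∧ ∀ s, b < s → s < t → σ s ≠ σ b

lemma freshIdx_eq {σ : ℕ → ℕ} {t b b' : ℕ} (hb : FreshIdx σ t b) (hb' : FreshIdx σ t b')
    (hσ : σ b = σ b') : b = b' := by
  rcases lt_trichotomy b b' with hlt | he | hlt
  · exact absurd hσ.symm (hb.2 b' hlt hb'.1)
  · exact he
  · exact absurd hσ (hb'.2 b hlt hb.1)

lemma y_le_of_page {n : ℕ} {σ y : ℕ → ℕ} (hy : NextArrival n σ y) {a t : ℕ}
    (hat : a < t) (htn : t < n) (hσ : σ t = σ a) : y a ≤ t :=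
  (hy a (hat.trans htn)).2 (Or.inl ⟨hat, htn, hσ⟩)

lemma fresh_y_ge {n : ℕ} {σ y : ℕ → ℕ} (hy : NextArrival n σ y) {t b : ℕ}
    (hb : FreshIdx σ t b) (htn : t < n) (hσ : σ t ≠ σ b) : t + 1 ≤ y b := by
  have hm := (hy b (hb.1.trans htn)).1
  rcases hm with ⟨h1, _h2, h3⟩ | hn
  · by_contra hc
    push_neg at hc
    rcases Nat.lt_or_ge (y b) t with hlt | hge
    · exact hb.2 (y b) h1 hlt h3
    · have he : y b = t := by omega
      exact hσ (he ▸ h3)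
  · omega

lemma no_free_evict {n : ℕ} {σ y : ℕ → ℕ} (hy : NextArrival n σ y) {t a b : ℕ}
    (htn : t < n) (hat : a < t) (hb : FreshIdx σ t b) (hσb : σ t ≠ σ b)
    (hσa : σ a = σ t) (hba : y b ≤ y a) : False := by
  have h1 : y a ≤ t := y_le_of_page hy hat htn hσa.symm
  have h2 : t + 1 ≤ y b := fresh_y_ge hy hb htn hσb
  omega

lemma match_card (X : Finset (ℕ × ℕ)) (S T : Finset ℕ)
    (hinj : ∀ p ∈ X, ∀ q ∈ X, p.1 = q.1 → p = q)
    (hST : ∀ b ∈ S, ∃ p ∈ X, p.2 = b ∧ p.1 ∈ T) :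
    S.card ≤ T.card := by
  classical
  calc S.card ≤ (X.filter (fun p => p.1 ∈ T)).card := by
        apply Finset.card_le_card_of_surjOn Prod.snd
        intro b hb
        obtain ⟨p, hp, h2, h1⟩ := hST b hb
        exact ⟨p, by simp [Finset.mem_filter, hp, h1], h2⟩
    _ ≤ T.card := by
        apply Finset.card_le_card_of_injOn Prod.fst
        · intro p hp
          simp only [Finset.mem_coe, Finset.mem_filter] at hp
          exact hp.2
        · intro p hp q hq hpq
          simp only [Finset.mem_coe, Finset.mem_filter] at hp hq
          exact hinj p hp.1 q hq.1 hpq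

lemma count_split (B' : Finset ℕ) (X Xn : Finset (ℕ × ℕ)) (UnT EAT : Finset ℕ)
    (hinj : ∀ p ∈ X, ∀ q ∈ X, p.1 = q.1 → p = q)
    (h1 : ∀ b ∈ B', (∀ p ∈ Xn, p.2 ≠ b) → (∀ p ∈ X, p.2 ≠ b) → b ∈ UnT)
    (h2 : ∀ b ∈ B', (∀ p ∈ Xn, p.2 ≠ b) → ∀ p ∈ X, p.2 = b → p.1 ∈ EAT) :
    (B'.filter (fun b => ∀ p ∈ Xn, p.2 ≠ b)).card ≤ UnT.card + EAT.card := by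
  classical
  set Un' := B'.filter (fun b => ∀ p ∈ Xn, p.2 ≠ b) with hUn'
  have hsplit : (Un'.filter (fun b => ∀ p ∈ X, p.2 ≠ b)).card +
      (Un'.filter (fun b => ¬ ∀ p ∈ X, p.2 ≠ b)).card = Un'.card :=
    Finset.card_filter_add_card_filter_not _
  have hc1 : (Un'.filter (fun b => ∀ p ∈ X, p.2 ≠ b)).card ≤ UnT.card := by
    apply Finset.card_le_card
    intro b hb
    simp only [Finset.mem_filter, hUn'] at hb
    exact h1 b hb.1.1 hb.1.2 hb.2
  have hc2 : (Un'.filter (fun b => ¬ ∀ p ∈ X, p.2 ≠ b)).card ≤ EAT.card := by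
    apply match_card X _ _ hinj
    intro b hb
    simp only [Finset.mem_filter, hUn'] at hb
    obtain ⟨⟨hbB, hbu⟩, hex⟩ := hb
    push_neg at hex
    obtain ⟨p, hpX, hp2⟩ := hex
    exact ⟨p, hpX, hp2, h2 b hbB hbu p hpX hp2⟩
  omega

lemma insert_pair_props {y : ℕ → ℕ} {A' B' : Finset ℕ} {X : Finset (ℕ × ℕ)} {a b : ℕ}
    (hX : ∀ p ∈ X, p.1 ∈ A' ∧ p.2 ∈ B' ∧ y p.2 ≤ y p.1)
    (hinj1 : ∀ p ∈ X, ∀ q ∈ X, p.1 = q.1 → p = q)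
    (hinj2 : ∀ p ∈ X, ∀ q ∈ X, p.2 = q.2 → p = q)
    (ha : a ∈ A') (hb : b ∈ B') (hyab : y b ≤ y a)
    (hf1 : ∀ p ∈ X, p.1 ≠ a) (hf2 : ∀ p ∈ X, p.2 ≠ b) :
    (∀ p ∈ insert (a, b) X, p.1 ∈ A' ∧ p.2 ∈ B' ∧ y p.2 ≤ y p.1) ∧
    (∀ p ∈ insert (a, b) X, ∀ q ∈ insert (a, b) X, p.1 = q.1 → p = q) ∧
    (∀ p ∈ insert (a, b) X, ∀ q ∈ insert (a, b) X, p.2 = q.2 → p = q) := by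
  refine ⟨?_, ?_, ?_⟩
  · intro p hp
    rcases Finset.mem_insert.mp hp with rfl | hp
    · exact ⟨ha, hb, hyab⟩
    · exact hX p hp
  · intro p hp q hq hpq
    rcases Finset.mem_insert.mp hp with rfl | hp <;> rcases Finset.mem_insert.mp hq with rfl | hq
    · rfl
    · exact absurd hpq.symm (hf1 q hq)
    · exact absurd hpq (hf1 p hp)
    · exact hinj1 p hp q hq hpq
  · intro p hp q hq hpq
    rcases Finset.mem_insert.mp hp with rfl | hp <;> rcases Finset.mem_insert.mp hq with rfl | hq
    · rfl
    · exact absurd hpq.symm (hf2 q hq)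
    · exact absurd hpq (hf2 p hp)
    · exact hinj2 p hp q hq hpq

lemma cache_lt {n : ℕ} (A : ℕ → Finset ℕ) (h0 : A 0 = ∅)
    (hsub : ∀ t < n, A (t + 1) ⊆ insert t (A t)) :
    ∀ t, t ≤ n → ∀ a ∈ A t, a < t := by
  intro t
  induction t with
  | zero => intro _ a ha; rw [h0] at ha; exact absurd ha (Finset.notMem_empty a)
  | succ t IH =>
    intro hle a ha
    have ht : t < n := by omega
    rcases Finset.mem_insert.mp (hsub t ht ha) with rfl | ha'
    · omega
    · have := IH (by omega) a ha'; omega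

lemma B_sub {n k : ℕ} {σ h : ℕ → ℕ} {B : ℕ → Finset ℕ} (hB : BlindOracleRun n k σ h B) :
    ∀ t < n, B (t + 1) ⊆ insert t (B t) := by
  intro t ht
  rcases hB.2 t ht with ⟨i, _, _, hEq⟩ | ⟨_, _, hEq⟩ | ⟨_, _, b, _, _, hEq⟩ <;> rw [hEq]
  · exact Finset.insert_subset_insert _ (Finset.sdiff_subset)
  · exact Finset.insert_subset_insert _ (Finset.sdiff_subset)

lemma B_fresh {n k : ℕ} {σ h : ℕ → ℕ} {B : ℕ → Finset ℕ} (hB : BlindOracleRun n k σ h B) :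
    ∀ t, t ≤ n → ∀ b ∈ B t, FreshIdx σ t b := by
  intro t
  induction t with
  | zero => intro _ b hb; rw [hB.1] at hb; exact absurd hb (Finset.notMem_empty b)
  | succ t IH =>
    intro hle b hb
    have ht : t < n := by omega
    have hIH := IH (by omega)
    -- extend freshness of an old element, given σ t ≠ σ b
    have ext : ∀ b ∈ B t, σ t ≠ σ b → FreshIdx σ (t + 1) b := by
      intro b hbB hne
      obtain ⟨h1, h2⟩ := hIH b hbB
      refine ⟨by omega, fun s hs1 hs2 => ?_⟩
      rcases Nat.lt_or_ge s t with hst | hst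
      · exact h2 s hs1 hst
      · have hst' : s = t := by omega
        subst hst'; exact hne
    rcases hB.2 t ht with ⟨i, hiB, hσi, hEq⟩ | ⟨hmiss, _, hEq⟩ | ⟨hmiss, _, bb, hbbB, _, hEq⟩
    · rw [hEq] at hb
      rcases Finset.mem_insert.mp hb with rfl | hb'
      · exact ⟨by omega, fun s hs1 hs2 => by omega⟩
      · have hbB := (Finset.mem_sdiff.mp hb').1
        have hbni : b ≠ i := by
          have := (Finset.mem_sdiff.mp hb').2
          simpa using this
        refine ext b hbB ?_
        intro heq
        have : σ b = σ i := by rw [← heq, hσi]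
        exact hbni (freshIdx_eq (hIH b hbB) (hIH i hiB) this)
    · rw [hEq] at hb
      rcases Finset.mem_insert.mp hb with rfl | hb'
      · exact ⟨by omega, fun s hs1 hs2 => by omega⟩
      · exact ext b hb' (fun heq => hmiss b hb' heq.symm)
    · rw [hEq] at hb
      rcases Finset.mem_insert.mp hb with rfl | hb'
      · exact ⟨by omega, fun s hs1 hs2 => by omega⟩
      · have hbB := (Finset.mem_sdiff.mp hb').1
        exact ext b hbB (fun heq => hmiss b hbB heq.symm)

/-- The partner of a newly-unmatched surviving element of B's cache was evicted at
a real cost by A. -/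
lemma partner_in_EA {n t : ℕ} {σ y : ℕ → ℕ} (hy : NextArrival n σ y) (htn : t < n)
    (At Bt A' B' : Finset ℕ) (X Xn : Finset (ℕ × ℕ))
    (hXsub : X.filter (fun p => p.1 ∈ A' ∧ p.2 ∈ B') ⊆ Xn)
    (htt : (t, t) ∈ Xn)
    (hX : ∀ p ∈ X, p.1 ∈ At ∧ p.2 ∈ Bt ∧ y p.2 ≤ y p.1)
    (hAlt : ∀ a ∈ At, a < t)
    (hfresh : ∀ b ∈ Bt, FreshIdx σ t b)
    (hB'sub : B' ⊆ insert t Bt)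
    (hfree : ∀ b ∈ Bt, b ∈ B' → σ t ≠ σ b) :
    ∀ b ∈ B', (∀ p ∈ Xn, p.2 ≠ b) → ∀ p ∈ X, p.2 = b →
      p.1 ∈ At.filter (fun a => a ∉ A' ∧ σ a ≠ σ t) := by
  intro b hbB' hunm p hpX hp2
  have hbt : b ≠ t := fun he => (hunm (t, t) htt) (he ▸ rfl)
  have hbBt : b ∈ Bt := by
    rcases Finset.mem_insert.mp (hB'sub hbB') with he | hb
    · exact absurd he hbt
    · exact hb
  have hpnotXn : p ∉ Xn := fun hc => (hunm p hc) hp2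
  have hp1A' : p.1 ∉ A' := by
    intro hc
    exact hpnotXn (hXsub (Finset.mem_filter.mpr ⟨hpX, hc, hp2 ▸ hbB'⟩))
  have hp1At : p.1 ∈ At := (hX p hpX).1
  have hσ : σ p.1 ≠ σ t := by
    intro hc
    subst hp2
    exact no_free_evict hy htn (hAlt p.1 hp1At) (hfresh p.2 hbBt)
      (hfree p.2 hbBt hbB') hc (hX p hpX).2.2
  exact Finset.mem_filter.mpr ⟨hp1At, hp1A', hσ⟩

/-- Common construction: drop broken pairs and match the current request with itself. -/
lemma step_matching {y : ℕ → ℕ} {At Bt A' B' : Finset ℕ} {X : Finset (ℕ × ℕ)} {t : ℕ}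
    (hX : ∀ p ∈ X, p.1 ∈ At ∧ p.2 ∈ Bt ∧ y p.2 ≤ y p.1)
    (hinj1 : ∀ p ∈ X, ∀ q ∈ X, p.1 = q.1 → p = q)
    (hinj2 : ∀ p ∈ X, ∀ q ∈ X, p.2 = q.2 → p = q)
    (hAlt : ∀ a ∈ At, a < t) (hBlt : ∀ b ∈ Bt, b < t)
    (htA : t ∈ A') (htB : t ∈ B') :
    (∀ p ∈ insert (t, t) (X.filter (fun p => p.1 ∈ A' ∧ p.2 ∈ B')),
        p.1 ∈ A' ∧ p.2 ∈ B' ∧ y p.2 ≤ y p.1) ∧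
    (∀ p ∈ insert (t, t) (X.filter (fun p => p.1 ∈ A' ∧ p.2 ∈ B')),
        ∀ q ∈ insert (t, t) (X.filter (fun p => p.1 ∈ A' ∧ p.2 ∈ B')), p.1 = q.1 → p = q) ∧
    (∀ p ∈ insert (t, t) (X.filter (fun p => p.1 ∈ A' ∧ p.2 ∈ B')),
        ∀ q ∈ insert (t, t) (X.filter (fun p => p.1 ∈ A' ∧ p.2 ∈ B')), p.2 = q.2 → p = q) := by
  classical
  apply insert_pair_props
  · intro p hp
    have h1 := Finset.mem_filter.mp hp
    exact ⟨h1.2.1, h1.2.2, (hX p h1.1).2.2⟩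
  · intro p hp q hq hpq
    exact hinj1 p (Finset.mem_filter.mp hp).1 q (Finset.mem_filter.mp hq).1 hpq
  · intro p hp q hq hpq
    exact hinj2 p (Finset.mem_filter.mp hp).1 q (Finset.mem_filter.mp hq).1 hpq
  · exact htA
  · exact htB
  · exact le_rfl
  · intro p hp
    have := hAlt p.1 (hX p (Finset.mem_filter.mp hp).1).1
    omega
  · intro p hp
    have := hBlt p.2 (hX p (Finset.mem_filter.mp hp).1).2.1
    omega

lemma main_invariant (n k : ℕ) (σ h y : ℕ → ℕ) (hy : NextArrival n σ y)
    (B : ℕ → Finset ℕ) (hB : BlindOracleRun n k σ h B)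
    (A : ℕ → Finset ℕ) (hA : CacheRun n k A) :
    ∀ t, t ≤ n → ∃ X U : Finset (ℕ × ℕ),
      (∀ p ∈ X, p.1 ∈ A t ∧ p.2 ∈ B t ∧ y p.2 ≤ y p.1) ∧
      (∀ p ∈ X, ∀ q ∈ X, p.1 = q.1 → p = q) ∧
      (∀ p ∈ X, ∀ q ∈ X, p.2 = q.2 → p = q) ∧
      U ⊆ (Finset.range n ×ˢ Finset.range n).filter
          (fun p => y p.1 < y p.2 ∧ h p.2 ≤ h p.1) ∧
      (∀ p ∈ U, p.1 < t ∧ p.1 ∉ B t) ∧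
      ((Finset.range t).filter (fun s => (∀ i ∈ B s, σ i ≠ σ s) ∧ (B s).card = k)).card +
        ((B t).filter (fun b => ∀ p ∈ X, p.2 ≠ b)).card
        ≤ (∑ s ∈ Finset.range t, ((A s).filter (fun i => i ∉ A (s + 1) ∧ σ i ≠ σ s)).card)
          + U.card := by
  classical
  intro t
  induction t with
  | zero =>
    intro _
    refine ⟨∅, ∅, by simp, by simp, by simp, by simp, by simp, ?_⟩
    simp [hB.1]
  | succ t IH =>
    intro hle
    have ht : t < n := by omega
    obtain ⟨X, U, hX, hinj1, hinj2, hUsub, hUB, hineq⟩ := IH (by omega)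
    have hAlt : ∀ a ∈ A t, a < t :=
      cache_lt A hA.1 (fun s hs => (hA.2.2 s hs).2) t (by omega)
    have hfresh : ∀ b ∈ B t, FreshIdx σ t b := B_fresh hB t (by omega)
    have hBlt : ∀ b ∈ B t, b < t := fun b hb => (hfresh b hb).1
    have htA : t ∈ A (t + 1) := (hA.2.2 t ht).1
    have hUB' : ∀ p ∈ U, p.1 < t + 1 ∧ p.1 ∉ B (t + 1) := by
      intro p hp
      obtain ⟨h1, h2⟩ := hUB p hp
      refine ⟨by omega, fun hc => ?_⟩
      rcases Finset.mem_insert.mp (B_sub hB t ht hc) with he | hm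
      · omega
      · exact h2 hm
    rcases hB.2 t ht with ⟨i, hiB, hσi, hBeq⟩ | ⟨hmiss, hcardlt, hBeq⟩ |
      ⟨hmiss, hcard, bs, hbsB, hmax, hBeq⟩
    -- CASE 1: hit
    · have htB : t ∈ B (t + 1) := by rw [hBeq]; exact Finset.mem_insert_self _ _
      have hfree : ∀ b ∈ B t, b ∈ B (t + 1) → σ t ≠ σ b := by
        intro b hbB hbB' heq
        have hbt : b ≠ t := by have := hBlt b hbB; omega
        rw [hBeq] at hbB'
        rcases Finset.mem_insert.mp hbB' with he | hm
        · exact hbt he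
        · have hbni : b ≠ i := by simpa using (Finset.mem_sdiff.mp hm).2
          exact hbni (freshIdx_eq (hfresh b hbB) (hfresh i hiB)
            (by rw [← heq]; exact hσi.symm))
      set Xn := insert (t, t) (X.filter (fun p => p.1 ∈ A (t + 1) ∧ p.2 ∈ B (t + 1))) with hXn
      obtain ⟨hP1, hP2, hP3⟩ := step_matching hX hinj1 hinj2 hAlt hBlt htA htB
      have hcount := count_split (B (t + 1)) X Xn
        ((B t).filter (fun b => ∀ p ∈ X, p.2 ≠ b))
        ((A t).filter (fun a => a ∉ A (t + 1) ∧ σ a ≠ σ t)) hinj1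
        (by
          intro b hbB' hu1 hu2
          have hbt : b ≠ t := fun he =>
            hu1 (t, t) (Finset.mem_insert_self _ _) (by simpa using he.symm)
          have hbB : b ∈ B t := by
            rcases Finset.mem_insert.mp (B_sub hB t ht hbB') with he | hm
            · exact absurd he hbt
            · exact hm
          exact Finset.mem_filter.mpr ⟨hbB, hu2⟩)
        (partner_in_EA hy ht (A t) (B t) (A (t + 1)) (B (t + 1)) X Xn
          (Finset.subset_insert _ _) (Finset.mem_insert_self _ _)
          hX hAlt hfresh (B_sub hB t ht) hfree)
      refine ⟨Xn, U, hP1, hP2, hP3, hUsub, hUB', ?_⟩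
      have hCB : ((Finset.range (t + 1)).filter
            (fun s => (∀ i ∈ B s, σ i ≠ σ s) ∧ (B s).card = k)).card
          = ((Finset.range t).filter
            (fun s => (∀ i ∈ B s, σ i ≠ σ s) ∧ (B s).card = k)).card := by
        rw [Finset.range_add_one, Finset.filter_insert, if_neg]
        intro hc; exact hc.1 i hiB hσi
      rw [hCB, Finset.sum_range_succ]
      omega
    -- CASE 2: miss, room
    · have htB : t ∈ B (t + 1) := by rw [hBeq]; exact Finset.mem_insert_self _ _
      have hfree : ∀ b ∈ B t, b ∈ B (t + 1) → σ t ≠ σ b :=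
        fun b hbB _ heq => hmiss b hbB heq.symm
      set Xn := insert (t, t) (X.filter (fun p => p.1 ∈ A (t + 1) ∧ p.2 ∈ B (t + 1))) with hXn
      obtain ⟨hP1, hP2, hP3⟩ := step_matching hX hinj1 hinj2 hAlt hBlt htA htB
      have hcount := count_split (B (t + 1)) X Xn
        ((B t).filter (fun b => ∀ p ∈ X, p.2 ≠ b))
        ((A t).filter (fun a => a ∉ A (t + 1) ∧ σ a ≠ σ t)) hinj1
        (by
          intro b hbB' hu1 hu2
          have hbt : b ≠ t := fun he =>
            hu1 (t, t) (Finset.mem_insert_self _ _) (by simpa using he.symm)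
          have hbB : b ∈ B t := by
            rcases Finset.mem_insert.mp (B_sub hB t ht hbB') with he | hm
            · exact absurd he hbt
            · exact hm
          exact Finset.mem_filter.mpr ⟨hbB, hu2⟩)
        (partner_in_EA hy ht (A t) (B t) (A (t + 1)) (B (t + 1)) X Xn
          (Finset.subset_insert _ _) (Finset.mem_insert_self _ _)
          hX hAlt hfresh (B_sub hB t ht) hfree)
      refine ⟨Xn, U, hP1, hP2, hP3, hUsub, hUB', ?_⟩
      have hCB : ((Finset.range (t + 1)).filter
            (fun s => (∀ i ∈ B s, σ i ≠ σ s) ∧ (B s).card = k)).card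
          = ((Finset.range t).filter
            (fun s => (∀ i ∈ B s, σ i ≠ σ s) ∧ (B s).card = k)).card := by
        rw [Finset.range_add_one, Finset.filter_insert, if_neg]
        intro hc; omega
      rw [hCB, Finset.sum_range_succ]
      omega
    -- CASE 3: miss, full cache, evict bs
    · have htB : t ∈ B (t + 1) := by rw [hBeq]; exact Finset.mem_insert_self _ _
      have hbst : bs < t := hBlt bs hbsB
      have hbsnot : bs ∉ B (t + 1) := by
        rw [hBeq]
        intro hc
        rcases Finset.mem_insert.mp hc with he | hmem
        · omega
        · exact (Finset.mem_sdiff.mp hmem).2 (Finset.mem_singleton_self bs)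
      have hfree : ∀ b ∈ B t, b ∈ B (t + 1) → σ t ≠ σ b :=
        fun b hbB _ heq => hmiss b hbB heq.symm
      have hσbs : σ t ≠ σ bs := fun heq => hmiss bs hbsB heq.symm
      have hCB : ((Finset.range (t + 1)).filter
            (fun s => (∀ i ∈ B s, σ i ≠ σ s) ∧ (B s).card = k)).card
          = ((Finset.range t).filter
            (fun s => (∀ i ∈ B s, σ i ≠ σ s) ∧ (B s).card = k)).card + 1 := by
        rw [Finset.range_add_one, Finset.filter_insert, if_pos ⟨hmiss, hcard⟩,
          Finset.card_insert_of_notMem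
            (fun hc => absurd (Finset.mem_of_mem_filter t hc) (by simp))]
      have hgen1 : ∀ Xn : Finset (ℕ × ℕ), (t, t) ∈ Xn →
          ∀ b ∈ B (t + 1), (∀ p ∈ Xn, p.2 ≠ b) → (∀ p ∈ X, p.2 ≠ b) →
          b ∈ (B t).filter (fun b => ∀ p ∈ X, p.2 ≠ b) ∧ b ≠ bs := by
        intro Xn htt b hbB' hu1 hu2
        have hbt : b ≠ t := fun he => hu1 (t, t) htt (by simpa using he.symm)
        have hbB : b ∈ B t := by
          rcases Finset.mem_insert.mp (B_sub hB t ht hbB') with he | hm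
          · exact absurd he hbt
          · exact hm
        exact ⟨Finset.mem_filter.mpr ⟨hbB, hu2⟩, fun he => hbsnot (he ▸ hbB')⟩
      have hgen2 : ∀ Xn : Finset (ℕ × ℕ),
          (X.filter (fun p => p.1 ∈ A (t + 1) ∧ p.2 ∈ B (t + 1))) ⊆ Xn → (t, t) ∈ Xn →
          ∀ b ∈ B (t + 1), (∀ p ∈ Xn, p.2 ≠ b) → ∀ p ∈ X, p.2 = b →
          p.1 ∈ (A t).filter (fun a => a ∉ A (t + 1) ∧ σ a ≠ σ t) :=
        fun Xn hs htt => partner_in_EA hy ht (A t) (B t) (A (t + 1)) (B (t + 1)) X Xn hs htt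
          hX hAlt hfresh (B_sub hB t ht) hfree
      by_cases hm : ∀ p ∈ X, p.2 ≠ bs
      -- CASE 3a: evicted element was unmatched
      · set Xn := insert (t, t) (X.filter (fun p => p.1 ∈ A (t + 1) ∧ p.2 ∈ B (t + 1))) with hXn
        obtain ⟨hP1, hP2, hP3⟩ := step_matching hX hinj1 hinj2 hAlt hBlt htA htB
        have hbsUn : bs ∈ (B t).filter (fun b => ∀ p ∈ X, p.2 ≠ b) :=
          Finset.mem_filter.mpr ⟨hbsB, hm⟩
        have hcount := count_split (B (t + 1)) X Xn
          (((B t).filter (fun b => ∀ p ∈ X, p.2 ≠ b)).erase bs)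
          ((A t).filter (fun a => a ∉ A (t + 1) ∧ σ a ≠ σ t)) hinj1
          (by
            intro b hbB' hu1 hu2
            obtain ⟨hUn, hne⟩ := hgen1 Xn (Finset.mem_insert_self _ _) b hbB' hu1 hu2
            exact Finset.mem_erase.mpr ⟨hne, hUn⟩)
          (hgen2 Xn (Finset.subset_insert _ _) (Finset.mem_insert_self _ _))
        have hUncard := Finset.card_erase_of_mem hbsUn
        have hUnpos : 1 ≤ ((B t).filter (fun b => ∀ p ∈ X, p.2 ≠ b)).card :=
          Finset.card_pos.mpr ⟨bs, hbsUn⟩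
        refine ⟨Xn, U, hP1, hP2, hP3, hUsub, hUB', ?_⟩
        rw [hCB, Finset.sum_range_succ]
        omega
      -- bs was matched, to ps.1
      · push_neg at hm
        obtain ⟨ps, hpsX, hps2⟩ := hm
        have haseA : ps.1 ∈ A t := (hX ps hpsX).1
        have hyps : y bs ≤ y ps.1 := by rw [← hps2]; exact (hX ps hpsX).2.2
        have hσas : σ ps.1 ≠ σ t := fun hc =>
          no_free_evict hy ht (hAlt ps.1 haseA) (hfresh bs hbsB) hσbs hc hyps
        by_cases haA' : ps.1 ∈ A (t + 1)
        -- CASE 3b/3c: partner of bs survives in A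
        · set S := ((B t).erase bs).filter (fun b => ∀ p ∈ X, p.2 = b → p.1 ∉ A (t + 1))
            with hS
          have hSne : S.Nonempty := by
            rw [Finset.nonempty_iff_ne_empty]
            intro hSe
            have hall : ∀ b ∈ B t, ∃ p ∈ X, p.2 = b ∧ p.1 ∈ (A (t + 1)).erase t := by
              intro b hbB
              by_cases hbbs : b = bs
              · subst hbbs
                exact ⟨ps, hpsX, hps2,
                  Finset.mem_erase.mpr ⟨by have := hAlt ps.1 haseA; omega, haA'⟩⟩
              · have hbe : b ∈ (B t).erase bs := Finset.mem_erase.mpr ⟨hbbs, hbB⟩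
                have hnb : ¬ (∀ p ∈ X, p.2 = b → p.1 ∉ A (t + 1)) := by
                  intro hc
                  have : b ∈ S := Finset.mem_filter.mpr ⟨hbe, hc⟩
                  rw [hSe] at this
                  exact Finset.notMem_empty b this
                push_neg at hnb
                obtain ⟨p, hpX, hp2, hp1⟩ := hnb
                exact ⟨p, hpX, hp2,
                  Finset.mem_erase.mpr ⟨by have := hAlt p.1 (hX p hpX).1; omega, hp1⟩⟩
            have hk := match_card X (B t) ((A (t + 1)).erase t) hinj1 hall
            rw [Finset.card_erase_of_mem htA] at hk
            have h5 := hA.2.1 (t + 1)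
            have h6 : 1 ≤ (B t).card := Finset.card_pos.mpr ⟨bs, hbsB⟩
            omega
          obtain ⟨b0, hb0S⟩ := hSne
          rw [hS, Finset.mem_filter] at hb0S
          have hb0ne : b0 ≠ bs := (Finset.mem_erase.mp hb0S.1).1
          have hb0B : b0 ∈ B t := (Finset.mem_erase.mp hb0S.1).2
          have hb0un : ∀ p ∈ X, p.2 = b0 → p.1 ∉ A (t + 1) := hb0S.2
          have hb0B' : b0 ∈ B (t + 1) := by
            rw [hBeq]
            exact Finset.mem_insert_of_mem
              (Finset.mem_sdiff.mpr ⟨hb0B, by simpa using hb0ne⟩)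
          have hσb0 : σ t ≠ σ b0 := fun heq => hmiss b0 hb0B heq.symm
          -- properties of the filtered matching
          have hXfP : ∀ p ∈ X.filter (fun p => p.1 ∈ A (t + 1) ∧ p.2 ∈ B (t + 1)),
              p.1 ∈ A (t + 1) ∧ p.2 ∈ B (t + 1) ∧ y p.2 ≤ y p.1 := by
            intro p hp
            have h1 := Finset.mem_filter.mp hp
            exact ⟨h1.2.1, h1.2.2, (hX p h1.1).2.2⟩
          have hXfi1 : ∀ p ∈ X.filter (fun p => p.1 ∈ A (t + 1) ∧ p.2 ∈ B (t + 1)),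
              ∀ q ∈ X.filter (fun p => p.1 ∈ A (t + 1) ∧ p.2 ∈ B (t + 1)),
              p.1 = q.1 → p = q := fun p hp q hq =>
            hinj1 p (Finset.mem_filter.mp hp).1 q (Finset.mem_filter.mp hq).1
          have hXfi2 : ∀ p ∈ X.filter (fun p => p.1 ∈ A (t + 1) ∧ p.2 ∈ B (t + 1)),
              ∀ q ∈ X.filter (fun p => p.1 ∈ A (t + 1) ∧ p.2 ∈ B (t + 1)),
              p.2 = q.2 → p = q := fun p hp q hq =>
            hinj2 p (Finset.mem_filter.mp hp).1 q (Finset.mem_filter.mp hq).1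
          by_cases hyb : y b0 ≤ y ps.1
          -- CASE 3b: rematch ps.1 with b0
          · have hf1 : ∀ p ∈ X.filter (fun p => p.1 ∈ A (t + 1) ∧ p.2 ∈ B (t + 1)),
                p.1 ≠ ps.1 := by
              intro p hp heq
              have hpX := (Finset.mem_filter.mp hp).1
              have hpe : p = ps := hinj1 p hpX ps hpsX heq
              have : p.2 ∈ B (t + 1) := (Finset.mem_filter.mp hp).2.2
              rw [hpe, hps2] at this
              exact hbsnot this
            have hf2 : ∀ p ∈ X.filter (fun p => p.1 ∈ A (t + 1) ∧ p.2 ∈ B (t + 1)),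
                p.2 ≠ b0 := by
              intro p hp heq
              exact hb0un p (Finset.mem_filter.mp hp).1 heq (Finset.mem_filter.mp hp).2.1
            obtain ⟨hQ1, hQ2, hQ3⟩ := insert_pair_props hXfP hXfi1 hXfi2 haA' hb0B' hyb hf1 hf2
            set Xn := insert (t, t) (insert (ps.1, b0)
              (X.filter (fun p => p.1 ∈ A (t + 1) ∧ p.2 ∈ B (t + 1)))) with hXn
            obtain ⟨hP1, hP2, hP3⟩ := insert_pair_props hQ1 hQ2 hQ3 htA htB le_rfl
              (by
                intro p hp heq
                rcases Finset.mem_insert.mp hp with rfl | hp'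
                · simp only at heq
                  have := hAlt ps.1 haseA; omega
                · have := hAlt p.1 (hX p (Finset.mem_filter.mp hp').1).1
                  omega)
              (by
                intro p hp heq
                rcases Finset.mem_insert.mp hp with rfl | hp'
                · simp only at heq
                  have := hBlt b0 hb0B; omega
                · have := hBlt p.2 (hX p (Finset.mem_filter.mp hp').1).2.1
                  omega)
            have hsub : X.filter (fun p => p.1 ∈ A (t + 1) ∧ p.2 ∈ B (t + 1)) ⊆ Xn :=
              fun x hx => Finset.mem_insert_of_mem (Finset.mem_insert_of_mem hx)
            have htt : (t, t) ∈ Xn := Finset.mem_insert_self _ _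
            have hpb0 : (ps.1, b0) ∈ Xn :=
              Finset.mem_insert_of_mem (Finset.mem_insert_self _ _)
            by_cases hb0m : ∀ p ∈ X, p.2 ≠ b0
            -- b0 was unmatched
            · have hb0Un : b0 ∈ (B t).filter (fun b => ∀ p ∈ X, p.2 ≠ b) :=
                Finset.mem_filter.mpr ⟨hb0B, hb0m⟩
              have hcount := count_split (B (t + 1)) X Xn
                (((B t).filter (fun b => ∀ p ∈ X, p.2 ≠ b)).erase b0)
                ((A t).filter (fun a => a ∉ A (t + 1) ∧ σ a ≠ σ t)) hinj1
                (by
                  intro b hbB' hu1 hu2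
                  obtain ⟨hUn, _⟩ := hgen1 Xn htt b hbB' hu1 hu2
                  exact Finset.mem_erase.mpr
                    ⟨fun he => hu1 (ps.1, b0) hpb0 (by simpa using he.symm), hUn⟩)
                (hgen2 Xn hsub htt)
              have hUncard := Finset.card_erase_of_mem hb0Un
              have hUnpos : 1 ≤ ((B t).filter (fun b => ∀ p ∈ X, p.2 ≠ b)).card :=
                Finset.card_pos.mpr ⟨b0, hb0Un⟩
              refine ⟨Xn, U, hP1, hP2, hP3, hUsub, hUB', ?_⟩
              rw [hCB, Finset.sum_range_succ]
              omega
            -- b0 was matched to an element evicted by A at real cost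
            · push_neg at hb0m
              obtain ⟨p0, hp0X, hp02⟩ := hb0m
              have ha0n : p0.1 ∉ A (t + 1) := hb0un p0 hp0X hp02
              have hyp0 : y b0 ≤ y p0.1 := by rw [← hp02]; exact (hX p0 hp0X).2.2
              have hσa0 : σ p0.1 ≠ σ t := fun hc =>
                no_free_evict hy ht (hAlt p0.1 (hX p0 hp0X).1) (hfresh b0 hb0B) hσb0 hc hyp0
              have ha0EA : p0.1 ∈ (A t).filter (fun a => a ∉ A (t + 1) ∧ σ a ≠ σ t) :=
                Finset.mem_filter.mpr ⟨(hX p0 hp0X).1, ha0n, hσa0⟩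
              have hcount := count_split (B (t + 1)) X Xn
                ((B t).filter (fun b => ∀ p ∈ X, p.2 ≠ b))
                (((A t).filter (fun a => a ∉ A (t + 1) ∧ σ a ≠ σ t)).erase p0.1) hinj1
                (fun b hbB' hu1 hu2 => (hgen1 Xn htt b hbB' hu1 hu2).1)
                (by
                  intro b hbB' hu p hpX hp2
                  have hEA := hgen2 Xn hsub htt b hbB' hu p hpX hp2
                  refine Finset.mem_erase.mpr ⟨fun heq => ?_, hEA⟩
                  have hpe : p = p0 := hinj1 p hpX p0 hp0X heq
                  have : b = b0 := by rw [← hp2, hpe, hp02]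
                  exact hu (ps.1, b0) hpb0 (by simpa using this.symm))
              have hEAcard := Finset.card_erase_of_mem ha0EA
              have hEApos : 1 ≤ ((A t).filter (fun a => a ∉ A (t + 1) ∧ σ a ≠ σ t)).card :=
                Finset.card_pos.mpr ⟨p0.1, ha0EA⟩
              refine ⟨Xn, U, hP1, hP2, hP3, hUsub, hUB', ?_⟩
              rw [hCB, Finset.sum_range_succ]
              omega
          -- CASE 3c: charge an inversion (bs, b0)
          · push_neg at hyb
            set Xn := insert (t, t)
              (X.filter (fun p => p.1 ∈ A (t + 1) ∧ p.2 ∈ B (t + 1))) with hXn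
            obtain ⟨hP1, hP2, hP3⟩ := step_matching hX hinj1 hinj2 hAlt hBlt htA htB
            have htt : (t, t) ∈ Xn := Finset.mem_insert_self _ _
            have hinv : y bs < y b0 := lt_of_le_of_lt hyps hyb
            have hh : h b0 ≤ h bs := hmax b0 hb0B
            have hnotU : (bs, b0) ∉ U := fun hc => (hUB (bs, b0) hc).2 hbsB
            have hU'card : (insert (bs, b0) U).card = U.card + 1 :=
              Finset.card_insert_of_notMem hnotU
            have hU'sub : insert (bs, b0) U ⊆ (Finset.range n ×ˢ Finset.range n).filter
                (fun p => y p.1 < y p.2 ∧ h p.2 ≤ h p.1) := by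
              apply Finset.insert_subset_iff.mpr
              refine ⟨Finset.mem_filter.mpr ⟨Finset.mem_product.mpr
                ⟨Finset.mem_range.mpr (by omega),
                 Finset.mem_range.mpr (by have := hBlt b0 hb0B; omega)⟩, hinv, hh⟩, hUsub⟩
            have hU'B : ∀ p ∈ insert (bs, b0) U, p.1 < t + 1 ∧ p.1 ∉ B (t + 1) := by
              intro p hp
              rcases Finset.mem_insert.mp hp with rfl | hp'
              · exact ⟨by omega, hbsnot⟩
              · exact hUB' p hp'
            have hcount := count_split (B (t + 1)) X Xn
              ((B t).filter (fun b => ∀ p ∈ X, p.2 ≠ b))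
              ((A t).filter (fun a => a ∉ A (t + 1) ∧ σ a ≠ σ t)) hinj1
              (fun b hbB' hu1 hu2 => (hgen1 Xn htt b hbB' hu1 hu2).1)
              (hgen2 Xn (Finset.subset_insert _ _) htt)
            refine ⟨Xn, insert (bs, b0) U, hP1, hP2, hP3, hU'sub, hU'B, ?_⟩
            rw [hCB, Finset.sum_range_succ]
            omega
        -- CASE 3d: partner of bs evicted by A, at real cost
        · have hasEA : ps.1 ∈ (A t).filter (fun a => a ∉ A (t + 1) ∧ σ a ≠ σ t) :=
            Finset.mem_filter.mpr ⟨haseA, haA', hσas⟩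
          set Xn := insert (t, t)
            (X.filter (fun p => p.1 ∈ A (t + 1) ∧ p.2 ∈ B (t + 1))) with hXn
          obtain ⟨hP1, hP2, hP3⟩ := step_matching hX hinj1 hinj2 hAlt hBlt htA htB
          have htt : (t, t) ∈ Xn := Finset.mem_insert_self _ _
          have hcount := count_split (B (t + 1)) X Xn
            ((B t).filter (fun b => ∀ p ∈ X, p.2 ≠ b))
            (((A t).filter (fun a => a ∉ A (t + 1) ∧ σ a ≠ σ t)).erase ps.1) hinj1
            (fun b hbB' hu1 hu2 => (hgen1 Xn htt b hbB' hu1 hu2).1)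
            (by
              intro b hbB' hu p hpX hp2
              have hEA := hgen2 Xn (Finset.subset_insert _ _) htt b hbB' hu p hpX hp2
              refine Finset.mem_erase.mpr ⟨fun heq => ?_, hEA⟩
              have hpe : p = ps := hinj1 p hpX ps hpsX heq
              have hbbs : b = bs := by rw [← hp2, hpe, hps2]
              exact hbsnot (hbbs ▸ hbB'))
          have hEAcard := Finset.card_erase_of_mem hasEA
          have hEApos : 1 ≤ ((A t).filter (fun a => a ∉ A (t + 1) ∧ σ a ≠ σ t)).card :=
            Finset.card_pos.mpr ⟨ps.1, hasEA⟩
          refine ⟨Xn, U, hP1, hP2, hP3, hUsub, hUB', ?_⟩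
          rw [hCB, Finset.sum_range_succ]
          omega


/-- For BlindOracle B and (in particular) the offline optimal A,
there exists a valid matching X between the final caches (each matched pair
(a,b) has the next arrival of b no later than that of a) such that
ALG_B + Φ(n) ≤ cost(A) + M, where Φ(n) is the number of unmatched requests in
B's final cache; in particular ALG_B ≤ OPT + M. -/
theorem blindoracle_vs_opt_matching
    (n k : ℕ) (σ h y : ℕ → ℕ)
    (hy : NextArrival n σ y)
    (B : ℕ → Finset ℕ) (hB : BlindOracleRun n k σ h B)
    (A : ℕ → Finset ℕ) (hA : CacheRun n k A) :
    ∃ X : Finset (ℕ × ℕ),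
      (∀ p ∈ X, p.1 ∈ A n ∧ p.2 ∈ B n ∧ y p.2 ≤ y p.1) ∧
      (∀ p ∈ X, ∀ q ∈ X, p.1 = q.1 → p = q) ∧
      (∀ p ∈ X, ∀ q ∈ X, p.2 = q.2 → p = q) ∧
      blindOracleCost n k σ B + ((B n).filter (fun b => ∀ p ∈ X, p.2 ≠ b)).card
        ≤ runCost n σ A + numInversions n h y ∧
      blindOracleCost n k σ B ≤ runCost n σ A + numInversions n h y := by
  obtain ⟨X, U, h1, h2, h3, hUsub, _, hineq⟩ :=
    main_invariant n k σ h y hy B hB A hA n le_rfl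
  have hUcard : U.card ≤ numInversions n h y := Finset.card_le_card hUsub
  have hmain : blindOracleCost n k σ B +
      ((B n).filter (fun b => ∀ p ∈ X, p.2 ≠ b)).card
      ≤ runCost n σ A + numInversions n h y := by
    unfold blindOracleCost runCost
    omega
  exact ⟨X, h1, h2, h3, hmain, by omega⟩
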